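/- Let v : ℂ → ℂ be holomorphic on a neighborhood of the closed unit disk such that Re(conj(z) * v(z)) < 0 for all z with |z| = 1. Then there exists a ∈ ℂ with |a| < 1 such that v(a) = 0. -/
import Mathlib


open Complex Metric

/-- A holomorphic vector field on a neighborhood of the closed unit disk that points
strictly inward on the unit circle has a zero in the open unit disk. -/
theorem markovian_vector_field_has_zero
    (v : ℂ → ℂ) (U : Set ℂ) (hU : IsOpen U)
    (hsub : closedBall (0 : ℂ) 1 ⊆ U)
    (hv : DifferentiableOn ℂ v U)
    (hb : ∀ z : ℂ, ‖z‖ = 1 → ((starRingEnd ℂ) z * v z).re < 0) :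
    ∃ a : ℂ, ‖a‖ < 1 ∧ v a = 0 := by
  by_contra h
  push_neg at h
  -- v is nonzero on the closed ball
  have hne : ∀ z ∈ closedBall (0 : ℂ) 1, v z ≠ 0 := by
    intro z hz
    rw [mem_closedBall, dist_zero_right] at hz
    rcases lt_or_eq_of_le hz with hlt | heq
    · exact h z hlt
    · intro hv0
      have := hb z heq
      rw [hv0, mul_zero] at this
      simp at this
  -- v is continuous at points of U
  have hcontU : ∀ z ∈ U, ContinuousAt v z :=
    fun z hz => (hv.differentiableAt (hU.mem_nhds hz)).continuousAt
  -- Cauchy: the circle integral of 1/v vanishes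
  have hzero : (∮ z in C((0 : ℂ), 1), (v z)⁻¹) = 0 := by
    apply circleIntegral_eq_zero_of_differentiable_on_off_countable zero_le_one
      Set.countable_empty
    · intro z hz
      exact ContinuousAt.continuousWithinAt (ContinuousAt.inv₀ (hcontU z (hsub hz)) (hne z hz))
    · intro z hz
      have hz1 : z ∈ closedBall (0 : ℂ) 1 := ball_subset_closedBall hz.1
      exact (hv.differentiableAt (hU.mem_nhds (hsub hz1))).inv (hne z hz1)
  -- Unfold the circle integral
  have hInt : (∫ θ in (0:ℝ)..(2 * Real.pi), circleMap 0 1 θ * I * (v (circleMap 0 1 θ))⁻¹) = 0 := by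
    have heq : (∫ θ in (0:ℝ)..(2 * Real.pi), circleMap 0 1 θ * I * (v (circleMap 0 1 θ))⁻¹)
        = ∮ z in C((0 : ℂ), 1), (v z)⁻¹ := by
      rw [circleIntegral]
      refine intervalIntegral.integral_congr fun θ _ => ?_
      simp [deriv_circleMap, smul_eq_mul]
      try ring
    rw [heq, hzero]
  -- define g θ = z / v z on the circle
  set g : ℝ → ℂ := fun θ => circleMap 0 1 θ * (v (circleMap 0 1 θ))⁻¹ with hg
  have hgcont : Continuous g := by
    apply (continuous_circleMap 0 1).mul
    apply Continuous.inv₀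
    · refine continuous_iff_continuousAt.2 fun θ => ?_
      exact (hcontU _ (hsub (circleMap_mem_closedBall 0 zero_le_one θ))).comp
        (continuous_circleMap 0 1).continuousAt
    · intro θ
      exact hne _ (circleMap_mem_closedBall 0 zero_le_one θ)
  have hgint : (∫ θ in (0:ℝ)..(2 * Real.pi), g θ) = 0 := by
    have : (∫ θ in (0:ℝ)..(2 * Real.pi), I * g θ) = 0 := by
      have heq : (∫ θ in (0:ℝ)..(2 * Real.pi), I * g θ)
          = ∫ θ in (0:ℝ)..(2 * Real.pi), circleMap 0 1 θ * I * (v (circleMap 0 1 θ))⁻¹ := by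
        refine intervalIntegral.integral_congr fun θ _ => ?_
        simp [hg]; ring
      rw [heq, hInt]
    rw [intervalIntegral.integral_const_mul] at this
    rcases mul_eq_zero.1 this with h1 | h1
    · exact absurd h1 I_ne_zero
    · exact h1
  -- the real part of g is strictly negative
  have hgre : ∀ θ : ℝ, (g θ).re < 0 := by
    intro θ
    set z := circleMap 0 1 θ with hz
    have hz1 : ‖z‖ = 1 := by
      have := circleMap_mem_sphere (0 : ℂ) zero_le_one θ
      rwa [mem_sphere_zero_iff_norm] at this
    have hvz : v z ≠ 0 := hne z (by simp [mem_closedBall, dist_zero_right, hz1])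
    have hkey := hb z hz1
    have hre : ((starRingEnd ℂ) z * v z).re = z.re * (v z).re + z.im * (v z).im := by
      simp [Complex.mul_re]
    have : (g θ).re = (z.re * (v z).re + z.im * (v z).im) / Complex.normSq (v z) := by
      rw [hg]
      simp only [← hz]
      rw [show z * (v z)⁻¹ = z / v z from (div_eq_mul_inv z (v z)).symm, Complex.div_re]
      ring
    rw [this]
    apply div_neg_of_neg_of_pos
    · rw [← hre]; exact hkey
    · exact Complex.normSq_pos.2 hvz
  -- contradiction: integral of a strictly negative function is negative
  have hgi : IntervalIntegrable (fun θ => -(g θ).re) MeasureTheory.volume 0 (2 * Real.pi) :=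
    ((Complex.continuous_re.comp hgcont).neg).intervalIntegrable _ _
  have hpos : 0 < ∫ θ in (0:ℝ)..(2 * Real.pi), -(g θ).re := by
    apply intervalIntegral.intervalIntegral_pos_of_pos hgi
    · exact fun x => by linarith [hgre x]
    · positivity
  have hre0 : (∫ θ in (0:ℝ)..(2 * Real.pi), -(g θ).re) = 0 := by
    have hgint' : IntervalIntegrable g MeasureTheory.volume 0 (2 * Real.pi) :=
      hgcont.intervalIntegrable _ _
    rw [intervalIntegral.integral_neg]
    have : (∫ θ in (0:ℝ)..(2 * Real.pi), (g θ).re)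
        = Complex.reCLM (∫ θ in (0:ℝ)..(2 * Real.pi), g θ) := by
      rw [← Complex.reCLM.intervalIntegral_comp_comm hgint']
      rfl
    rw [this, hgint]
    simp
  rw [hre0] at hpos
  exact lt_irrefl 0 hpos
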